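/- arXiv:math/0609810 — 7 statements merged into one kernel-verified Lean document; each statement's English description precedes it below -/
import Mathlib

section
/- There exists a connected 3-regular finite graph G that is not vertex-transitive, yet all vertex residuals Res(G, {v}) for v ∈ V(G) are isomorphic (each isomorphic to K₁). -/
open SimpleGraph

/-- Distance from a set of vertices `S` to a vertex `v`: `min_{s ∈ S} d(s, v)`. -/
noncomputable def setDist {V : Type*} (G : SimpleGraph V) (S : Set V) (v : V) : ℕ :=
  sInf ((fun s => G.dist s v) '' S)

/-- The set of vertices at maximal distance from `S`. -/
def resSet {V : Type*} (G : SimpleGraph V) (S : Set V) : Set V :=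
  {v | ∀ w, setDist G S w ≤ setDist G S v}

/-- The distance-residual graph: subgraph induced on vertices at maximal distance from `S`. -/
def Res {V : Type*} (G : SimpleGraph V) (S : Set V) : SimpleGraph (resSet G S) :=
  SimpleGraph.induce (resSet G S) G

namespace Statement2Aux

/-- Adjacency matrix of our 14-vertex cubic graph. -/
def A : Fin 14 → Fin 14 → Bool := ![
  ![false, false, false, false, false, true, true, false, false, true, false, false, false, false],
  ![false, false, true, true, true, false, false, false, false, false, false, false, false, false],
  ![false, true, false, false, false, false, false, false, false, false, false, true, false, true],
  ![false, true, false, false, true, false, false, true, false, false, false, false, false, false],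
  ![false, true, false, true, false, true, false, false, false, false, false, false, false, false],
  ![true, false, false, false, true, false, false, false, false, false, false, true, false, false],
  ![true, false, false, false, false, false, false, false, true, true, false, false, false, false],
  ![false, false, false, true, false, false, false, false, false, true, false, false, true, false],
  ![false, false, false, false, false, false, true, false, false, false, true, true, false, false],
  ![true, false, false, false, false, false, true, true, false, false, false, false, false, false],
  ![false, false, false, false, false, false, false, false, true, false, false, false, true, true],
  ![false, false, true, false, false, true, false, false, true, false, false, false, false, false],
  ![false, false, false, false, false, false, false, true, false, false, true, false, false, true],
  ![false, false, true, false, false, false, false, false, false, false, true, false, true, false]]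

/-- The graph. -/
def G14 : SimpleGraph (Fin 14) where
  Adj u v := A u v = true
  symm := ⟨fun u v h => (by decide : ∀ u v : Fin 14, A u v = true → A v u = true) u v h⟩
  loopless := ⟨fun v h => (by decide : ∀ v : Fin 14, ¬(A v v = true)) v h⟩

instance : DecidableRel G14.Adj := fun u v => inferInstanceAs (Decidable (A u v = true))

/-- Distance matrix. -/
def D : Fin 14 → Fin 14 → ℕ := ![
  ![0, 3, 3, 3, 2, 1, 1, 2, 2, 1, 3, 2, 3, 4],
  ![3, 0, 1, 1, 1, 2, 4, 2, 3, 3, 3, 2, 3, 2],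
  ![3, 1, 0, 2, 2, 2, 3, 3, 2, 4, 2, 1, 2, 1],
  ![3, 1, 2, 0, 1, 2, 3, 1, 4, 2, 3, 3, 2, 3],
  ![2, 1, 2, 1, 0, 1, 3, 2, 3, 3, 4, 2, 3, 3],
  ![1, 2, 2, 2, 1, 0, 2, 3, 2, 2, 3, 1, 4, 3],
  ![1, 4, 3, 3, 3, 2, 0, 2, 1, 1, 2, 2, 3, 3],
  ![2, 2, 3, 1, 2, 3, 2, 0, 3, 1, 2, 4, 1, 2],
  ![2, 3, 2, 4, 3, 2, 1, 3, 0, 2, 1, 1, 2, 2],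
  ![1, 3, 4, 2, 3, 2, 1, 1, 2, 0, 3, 3, 2, 3],
  ![3, 3, 2, 3, 4, 3, 2, 2, 1, 3, 0, 2, 1, 1],
  ![2, 2, 1, 3, 2, 1, 2, 4, 1, 3, 2, 0, 3, 2],
  ![3, 3, 2, 2, 3, 4, 3, 1, 2, 2, 1, 3, 0, 1],
  ![4, 2, 1, 3, 3, 3, 3, 2, 2, 3, 1, 2, 1, 0]]

/-- The unique eccentric vertex of each vertex. -/
def f : Fin 14 → Fin 14 := ![13, 6, 9, 8, 10, 12, 1, 11, 3, 2, 4, 7, 5, 0]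

lemma hzero : ∀ u : Fin 14, D u u = 0 := by decide

lemma heq : ∀ u v : Fin 14, D u v = 0 → u = v := by decide

lemma hstep : ∀ u v : Fin 14, D u v ≠ 0 → ∃ w, G14.Adj w v ∧ D u w + 1 = D u v := by decide

lemma htri : ∀ v u w : Fin 14, G14.Adj u w → D u v ≤ D w v + 1 := by decide

lemma exists_walk : ∀ (n : ℕ) (u v : Fin 14), D u v = n → ∃ p : G14.Walk u v, p.length ≤ n := by
  intro n
  induction n with
  | zero =>
    intro u v h
    obtain rfl := heq u v h
    exact ⟨SimpleGraph.Walk.nil, le_rfl⟩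
  | succ n ih =>
    intro u v h
    obtain ⟨w, hadj, hw⟩ := hstep u v (by omega)
    obtain ⟨p, hp⟩ := ih u w (by omega)
    exact ⟨p.concat hadj, by rw [SimpleGraph.Walk.length_concat]; omega⟩

lemma walk_lower : ∀ {u v : Fin 14} (p : G14.Walk u v), D u v ≤ p.length := by
  intro u v p
  induction p with
  | nil => simp [hzero]
  | @cons a b c h p ih =>
    calc D a c ≤ D b c + 1 := htri c a b h
    _ ≤ p.length + 1 := by omega
    _ = (SimpleGraph.Walk.cons h p).length := (SimpleGraph.Walk.length_cons h p).symm

lemma g14_connected : G14.Connected := by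
  rw [SimpleGraph.connected_iff]
  refine ⟨fun u v => ?_, ⟨0⟩⟩
  obtain ⟨p, _⟩ := exists_walk (D u v) u v rfl
  exact ⟨p⟩

lemma dist_eq : ∀ u v : Fin 14, G14.dist u v = D u v := by
  intro u v
  refine le_antisymm ?_ ?_
  · obtain ⟨p, hp⟩ := exists_walk (D u v) u v rfl
    exact le_trans (SimpleGraph.dist_le p) hp
  · obtain ⟨p, hp⟩ := (g14_connected.preconnected u v).exists_walk_length_eq_dist
    calc D u v ≤ p.length := walk_lower p
    _ = G14.dist u v := hp

lemma key : ∀ v w : Fin 14, (∀ x, D v x ≤ D v w) ↔ w = f v := by decide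

lemma setDist_eq (v w : Fin 14) : setDist G14 {v} w = G14.dist v w := by
  unfold setDist
  rw [Set.image_singleton, csInf_singleton]

lemma mem_res (v w : Fin 14) : w ∈ resSet G14 {v} ↔ w = f v := by
  have : (∀ x, setDist G14 {v} x ≤ setDist G14 {v} w) ↔ w = f v := by
    simp only [setDist_eq, dist_eq]
    exact key v w
  exact this

lemma no_triangle_at_2 : ∀ x y : Fin 14, ¬(G14.Adj 2 x ∧ G14.Adj 2 y ∧ G14.Adj x y) := by
  decide

lemma degree_three : ∀ v : Fin 14, (G14.neighborSet v).toFinset.card = 3 := by decide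

/-- The isomorphism from the residual at `v` to `K₁`. -/
def isoRes (v : Fin 14) : Res G14 {v} ≃g (⊤ : SimpleGraph (Fin 1)) where
  toFun := fun _ => 0
  invFun := fun _ => ⟨f v, (mem_res v (f v)).mpr rfl⟩
  left_inv := fun ⟨w, hw⟩ => Subtype.ext ((mem_res v w).mp hw).symm
  right_inv := fun i => Subsingleton.elim _ _
  map_rel_iff' := by
    intro a b
    have hab : a = b :=
      Subtype.ext (((mem_res v a.1).mp a.2).trans ((mem_res v b.1).mp b.2).symm)
    subst hab
    constructor
    · intro h
      exact absurd rfl h.ne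
    · intro h
      exact absurd rfl h.ne

end Statement2Aux

open Statement2Aux in
theorem statement_2 :
    ∃ (m : ℕ) (G : SimpleGraph (Fin m)),
      G.Connected ∧ (∀ v, (G.neighborSet v).ncard = 3) ∧
      ¬ (∀ u v : Fin m, ∃ φ : G ≃g G, φ u = v) ∧
      ∀ v : Fin m, Nonempty (Res G {v} ≃g (⊤ : SimpleGraph (Fin 1))) := by
  refine ⟨14, G14, g14_connected, ?_, ?_, fun v => ⟨isoRes v⟩⟩
  · intro v
    rw [Set.ncard_eq_toFinset_card']
    exact degree_three v
  · intro h
    obtain ⟨φ, hφ⟩ := h 0 2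
    have h1 : G14.Adj (φ 0) (φ 6) := φ.map_rel_iff.mpr (by decide)
    have h2 : G14.Adj (φ 0) (φ 9) := φ.map_rel_iff.mpr (by decide)
    have h3 : G14.Adj (φ 6) (φ 9) := φ.map_rel_iff.mpr (by decide)
    rw [hφ] at h1 h2
    exact no_triangle_at_2 (φ 6) (φ 9) ⟨h1, h2, h3⟩
end

section
/- There exists a connected finite graph G that is not edge-transitive, yet all edge residuals Res(G, {u,v}) over edges {u,v} of G are isomorphic. -/
open SimpleGraph

def adjB : Fin 6 → Fin 6 → Bool := fun a b =>
  (a.val, b.val) ∈ [(0,2),(2,0),(0,3),(3,0),(0,5),(5,0),(1,2),(2,1),(1,3),(3,1),(1,4),(4,1)]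

lemma adjB_symm : ∀ a b : Fin 6, adjB a b = true → adjB b a = true := by decide
lemma adjB_irrefl : ∀ a : Fin 6, ¬ adjB a a = true := by decide

def G6 : SimpleGraph (Fin 6) where
  Adj a b := adjB a b = true
  symm := ⟨fun a b h => adjB_symm a b h⟩
  loopless := ⟨fun a h => adjB_irrefl a h⟩

instance : DecidableRel G6.Adj := fun a b => inferInstanceAs (Decidable (adjB a b = true))

lemma G6_conn : G6.Connected := by
  have h0 : ∀ v : Fin 6, G6.Reachable 0 v := by
    have h2 : G6.Adj 0 2 := by decide
    have h21 : G6.Adj 2 1 := by decide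
    have h14 : G6.Adj 1 4 := by decide
    intro v
    fin_cases v
    · exact Reachable.refl _
    · exact (h2.reachable).trans h21.reachable
    · exact h2.reachable
    · exact Adj.reachable (by decide)
    · exact ((h2.reachable).trans h21.reachable).trans h14.reachable
    · exact Adj.reachable (by decide)
  exact ⟨fun u v => (h0 u).symm.trans (h0 v)⟩

lemma walk_bound (f : Fin 6 → ℕ) (hlip : ∀ a b, G6.Adj a b → f b ≤ f a + 1) :
    ∀ {a b : Fin 6} (p : G6.Walk a b), f b ≤ f a + p.length := by
  intro a b p
  induction p with
  | nil => simp
  | cons h q ih =>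
      have := hlip _ _ h
      simp only [SimpleGraph.Walk.length_cons]
      omega

lemma dist_lower (f : Fin 6 → ℕ) (hlip : ∀ a b, G6.Adj a b → f b ≤ f a + 1)
    (a b : Fin 6) : f b ≤ f a + G6.dist a b := by
  obtain ⟨p, hp⟩ := G6_conn.exists_walk_length_eq_dist a b
  simpa [hp] using walk_bound f hlip p

lemma setDist_eq (u v : Fin 6) (f : Fin 6 → ℕ)
    (h0u : f u = 0) (h0v : f v = 0)
    (hzero : ∀ w, f w = 0 → w = u ∨ w = v)
    (hlip : ∀ a b, G6.Adj a b → f b ≤ f a + 1)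
    (hstep : ∀ w, f w ≠ 0 → ∃ w', G6.Adj w' w ∧ f w' + 1 = f w) :
    ∀ w, setDist G6 {u, v} w = f w := by
  have himg : ∀ w : Fin 6, (fun s => G6.dist s w) '' {u, v} = {G6.dist u w, G6.dist v w} :=
    fun w => Set.image_pair _ u v
  have hne : ∀ w : Fin 6, ({G6.dist u w, G6.dist v w} : Set ℕ).Nonempty :=
    fun w => ⟨G6.dist u w, Or.inl rfl⟩
  have hlow : ∀ w, f w ≤ setDist G6 {u, v} w := by
    intro w
    rw [setDist, himg]
    refine le_csInf (hne w) ?_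
    rintro b (rfl | rfl)
    · simpa [h0u] using dist_lower f hlip u w
    · simpa [h0v] using dist_lower f hlip v w
  have hupp : ∀ n w, f w = n → setDist G6 {u, v} w ≤ n := by
    intro n
    induction n using Nat.strong_induction_on with
    | _ n ih =>
      intro w hw
      rcases Nat.eq_zero_or_pos n with rfl | hpos
      · rcases hzero w hw with rfl | rfl
        · rw [setDist, himg]
          exact Nat.sInf_le (by simp [SimpleGraph.dist_self])
        · rw [setDist, himg]
          exact Nat.sInf_le (by simp [SimpleGraph.dist_self])
      · obtain ⟨w', hadj, hw'⟩ := hstep w (by omega)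
        have hw'val : f w' = n - 1 := by omega
        have ih' : setDist G6 {u, v} w' ≤ n - 1 := ih (n - 1) (by omega) w' hw'val
        -- sInf attained for w'
        have hmem : sInf ({G6.dist u w', G6.dist v w'} : Set ℕ) ∈
            ({G6.dist u w', G6.dist v w'} : Set ℕ) := Nat.sInf_mem (hne w')
        have hsd : setDist G6 {u, v} w' = sInf ({G6.dist u w', G6.dist v w'} : Set ℕ) := by
          rw [setDist, himg]
        have hd1 : G6.dist w' w ≤ 1 := by
          have := SimpleGraph.dist_le (hadj.toWalk)
          simpa using this
        have key : ∃ s, (s = u ∨ s = v) ∧ G6.dist s w' = setDist G6 {u, v} w' := by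
          rcases hmem with h | h
          · exact ⟨u, Or.inl rfl, by rw [hsd]; exact h.symm⟩
          · exact ⟨v, Or.inr rfl, by rw [hsd]; exact (Set.mem_singleton_iff.mp h).symm⟩
        obtain ⟨s, hs, hsval⟩ := key
        have htri : G6.dist s w ≤ G6.dist s w' + G6.dist w' w := G6_conn.dist_triangle
        have hle : setDist G6 {u, v} w ≤ G6.dist s w := by
          rw [setDist, himg]
          rcases hs with rfl | rfl
          · exact Nat.sInf_le (Or.inl rfl)
          · exact Nat.sInf_le (Or.inr rfl)
        omega
  exact fun w => le_antisymm (hupp (f w) w rfl) (hlow w)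

lemma resSet_single (u v : Fin 6) (f : Fin 6 → ℕ) (r : Fin 6)
    (h0u : f u = 0) (h0v : f v = 0)
    (hzero : ∀ w, f w = 0 → w = u ∨ w = v)
    (hlip : ∀ a b, G6.Adj a b → f b ≤ f a + 1)
    (hstep : ∀ w, f w ≠ 0 → ∃ w', G6.Adj w' w ∧ f w' + 1 = f w)
    (hmax : ∀ z, (∀ w, f w ≤ f z) ↔ z = r) :
    resSet G6 {u, v} = {r} := by
  have h := setDist_eq u v f h0u h0v hzero hlip hstep
  ext z
  simp only [resSet, Set.mem_setOf_eq, Set.mem_singleton_iff]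
  constructor
  · intro hz
    exact (hmax z).mp (fun w => by rw [← h w, ← h z]; exact hz w)
  · intro hz w
    rw [h w, h z]
    exact (hmax z).mpr hz w

lemma iso_single {S T : Set (Fin 6)} {r1 r2 : Fin 6}
    (hS : resSet G6 S = {r1}) (hT : resSet G6 T = {r2}) :
    Nonempty (Res G6 S ≃g Res G6 T) := by
  have hS' : ∀ a : resSet G6 S, (a : Fin 6) = r1 := fun a =>
    (Set.ext_iff.mp hS (a : Fin 6)).mp a.2
  have hT' : ∀ a : resSet G6 T, (a : Fin 6) = r2 := fun a =>
    (Set.ext_iff.mp hT (a : Fin 6)).mp a.2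
  have hr1 : r1 ∈ resSet G6 S := (Set.ext_iff.mp hS r1).mpr rfl
  have hr2 : r2 ∈ resSet G6 T := (Set.ext_iff.mp hT r2).mpr rfl
  refine ⟨⟨⟨fun _ => ⟨r2, hr2⟩, fun _ => ⟨r1, hr1⟩, ?_, ?_⟩, ?_⟩⟩
  · intro a; exact Subtype.ext (hS' a).symm
  · intro a; exact Subtype.ext (hT' a).symm
  · intro a b
    constructor
    · intro h
      exact absurd (show G6.Adj r2 r2 from h) (G6.irrefl)
    · intro h
      have : G6.Adj (a : Fin 6) (b : Fin 6) := h
      rw [hS' a, hS' b] at this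
      exact absurd this (G6.irrefl)

def fE (u v : Fin 6) : Fin 6 → ℕ :=
  if (u = 0 ∧ v = 2) ∨ (u = 2 ∧ v = 0) then ![0,1,0,1,2,1]
  else if (u = 0 ∧ v = 3) ∨ (u = 3 ∧ v = 0) then ![0,1,1,0,2,1]
  else if (u = 0 ∧ v = 5) ∨ (u = 5 ∧ v = 0) then ![0,2,1,1,3,0]
  else if (u = 1 ∧ v = 2) ∨ (u = 2 ∧ v = 1) then ![1,0,0,1,1,2]
  else if (u = 1 ∧ v = 3) ∨ (u = 3 ∧ v = 1) then ![1,0,1,0,1,2]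
  else ![2,0,1,1,0,3]

def rE (u v : Fin 6) : Fin 6 := if u = 0 ∨ v = 0 then 4 else 5

lemma hyp1 : ∀ u v : Fin 6, G6.Adj u v → fE u v u = 0 ∧ fE u v v = 0 := by decide
lemma hyp2 : ∀ u v : Fin 6, G6.Adj u v → ∀ w, fE u v w = 0 → w = u ∨ w = v := by decide
lemma hyp3 : ∀ u v : Fin 6, G6.Adj u v → ∀ a b, G6.Adj a b → fE u v b ≤ fE u v a + 1 := by
  decide
lemma hyp4 : ∀ u v : Fin 6, G6.Adj u v →
    ∀ w, fE u v w ≠ 0 → ∃ w', G6.Adj w' w ∧ fE u v w' + 1 = fE u v w := by decide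
lemma hyp5 : ∀ u v : Fin 6, G6.Adj u v →
    ∀ z, (∀ w, fE u v w ≤ fE u v z) ↔ z = rE u v := by decide

lemma key : ∀ u v : Fin 6, G6.Adj u v → resSet G6 {u, v} = {rE u v} := fun u v h =>
  resSet_single u v (fE u v) (rE u v) (hyp1 u v h).1 (hyp1 u v h).2 (hyp2 u v h)
    (hyp3 u v h) (hyp4 u v h) (hyp5 u v h)

theorem statement_4 :
    ∃ (m : ℕ) (G : SimpleGraph (Fin m)),
      G.Connected ∧
      ¬ (∀ e ∈ G.edgeSet, ∀ f ∈ G.edgeSet, ∃ φ : G ≃g G, e.map φ = f) ∧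
      ∀ u v x y : Fin m, G.Adj u v → G.Adj x y →
        Nonempty (Res G {u, v} ≃g Res G {x, y}) := by
  refine ⟨6, G6, G6_conn, ?_, ?_⟩
  · intro hET
    obtain ⟨φ, hφ⟩ := hET s(0, 2) (G6.mem_edgeSet.mpr (by decide))
      s(0, 5) (G6.mem_edgeSet.mpr (by decide))
    rw [Sym2.map_pair_eq, Sym2.eq_iff] at hφ
    have h5 : ∀ x : Fin 6, G6.Adj 5 x → x = 0 := by decide
    rcases hφ with ⟨h0, h2⟩ | ⟨h0, h2⟩
    · have h21 : G6.Adj 2 1 := by decide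
      have hadj : G6.Adj (φ 2) (φ 1) := φ.map_adj_iff.mpr h21
      rw [h2] at hadj
      have h1 : φ 1 = 0 := h5 _ hadj
      have : (1 : Fin 6) = 0 := φ.injective (by rw [h1, h0])
      exact absurd this (by decide)
    · have h03 : G6.Adj 0 3 := by decide
      have hadj : G6.Adj (φ 0) (φ 3) := φ.map_adj_iff.mpr h03
      rw [h0] at hadj
      have h3 : φ 3 = 0 := h5 _ hadj
      have : (3 : Fin 6) = 2 := φ.injective (by rw [h3, h2])
      exact absurd this (by decide)
  · intro u v x y huv hxy
    exact iso_single (key u v huv) (key x y hxy)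
end

section
/- For the cycle C_{2k} (k ≥ 1) and any vertex v, the vertex residual Res(C_{2k}, {v}) is isomorphic to K₁, and for any edge {u,v}, the edge residual Res(C_{2k}, {u,v}) is isomorphic to K₂. -/
open SimpleGraph
open scoped Fin.NatCast Fin.CommRing

section CycleDist

variable {n : ℕ} [NeZero n]

private theorem adjA (hn : 2 ≤ n) (x : Fin n) : (cycleGraph n).Adj x (x + 1) := by
  rw [cycleGraph_adj']
  right
  have h1 : x + 1 - x = 1 := by ring
  rw [h1, Fin.val_one', Nat.mod_eq_of_lt hn]

private theorem adjB_s5 (hn : 2 ≤ n) (x : Fin n) : (cycleGraph n).Adj x (x - 1) := by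
  rw [cycleGraph_adj']
  left
  have h1 : x - (x - 1) = 1 := by ring
  rw [h1, Fin.val_one', Nat.mod_eq_of_lt hn]

private theorem distA (hn : 2 ≤ n) (j : ℕ) : ∀ v : Fin n,
    (cycleGraph n).dist v (v + (j : Fin n)) ≤ j := by
  obtain ⟨m, rfl⟩ : ∃ m, n = m + 1 := ⟨n - 1, by omega⟩
  induction j with
  | zero => simp
  | succ j ih =>
    intro v
    have h1 : (cycleGraph (m+1)).Adj v (v + 1) := adjA hn v
    have h3 : v + ((j:ℕ)+1 : ℕ) = (v + 1) + (j : Fin (m+1)) := by push_cast; ring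
    rw [h3]
    calc (cycleGraph (m+1)).dist v ((v+1) + (j:Fin (m+1)))
        ≤ (cycleGraph (m+1)).dist v (v+1) + (cycleGraph (m+1)).dist (v+1) ((v+1)+(j:Fin (m+1))) :=
          cycleGraph_connected.dist_triangle
      _ ≤ 1 + j := by
          have h4 := SimpleGraph.dist_le h1.toWalk
          have h5 := ih (v + 1)
          simp at h4
          omega
      _ = j + 1 := by omega

private theorem distB (hn : 2 ≤ n) (j : ℕ) : ∀ v : Fin n,
    (cycleGraph n).dist v (v - (j : Fin n)) ≤ j := by
  obtain ⟨m, rfl⟩ : ∃ m, n = m + 1 := ⟨n - 1, by omega⟩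
  induction j with
  | zero => simp
  | succ j ih =>
    intro v
    have h1 : (cycleGraph (m+1)).Adj v (v - 1) := adjB_s5 hn v
    have h3 : v - ((j:ℕ)+1 : ℕ) = (v - 1) - (j : Fin (m+1)) := by push_cast; ring
    rw [h3]
    calc (cycleGraph (m+1)).dist v ((v-1) - (j:Fin (m+1)))
        ≤ (cycleGraph (m+1)).dist v (v-1) + (cycleGraph (m+1)).dist (v-1) ((v-1)-(j:Fin (m+1))) :=
          cycleGraph_connected.dist_triangle
      _ ≤ 1 + j := by
          have h4 := SimpleGraph.dist_le h1.toWalk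
          have h5 := ih (v - 1)
          simp at h4
          omega
      _ = j + 1 := by omega

private theorem cf_add (hn : 2 ≤ n) (z : Fin n) :
    min (z+1).val (n - (z+1).val) ≤ min z.val (n - z.val) + 1 := by
  have h1 : (z+1).val = (z.val + 1) % n := by
    rw [Fin.val_add, Fin.val_one', Nat.mod_eq_of_lt hn]
  have hz := z.isLt
  rcases Nat.lt_or_ge (z.val + 1) n with h | h
  · rw [h1, Nat.mod_eq_of_lt h]; omega
  · have : z.val + 1 = n := by omega
    rw [h1, this, Nat.mod_self]; omega

private theorem sub_one_val (hn : 2 ≤ n) (z : Fin n) :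
    (z-1).val = (z.val + (n - 1)) % n := by
  rw [Fin.sub_def]; simp only [Fin.val_one', Nat.mod_eq_of_lt hn]; rw [Nat.add_comm]

omit [NeZero n] in
private theorem mod_cases (hn : 2 ≤ n) {t : ℕ} (ht : t < n) :
    (t + (n - 1)) % n = if t = 0 then n - 1 else t - 1 := by
  split
  · next h => rw [h, Nat.zero_add, Nat.mod_eq_of_lt (by omega)]
  · next h =>
    have h2 : t + (n-1) - n = t - 1 := by omega
    rw [Nat.mod_eq_sub_mod (by omega), h2, Nat.mod_eq_of_lt (by omega)]

private theorem cf_sub (hn : 2 ≤ n) (z : Fin n) :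
    min (z-1).val (n - (z-1).val) ≤ min z.val (n - z.val) + 1 := by
  have hz := z.isLt
  rw [sub_one_val hn, mod_cases hn hz]
  split <;> omega

private theorem walk_lb (hn : 2 ≤ n) {v w : Fin n} (p : (cycleGraph n).Walk v w) :
    min (w - v).val (n - (w - v).val) ≤ p.length := by
  induction p with
  | nil => simp
  | @cons a b c hab q ih =>
    rw [cycleGraph_adj'] at hab
    rw [Walk.length_cons]
    rcases hab with h | h
    · have hab1 : a - b = 1 := by
        apply Fin.ext; rw [h, Fin.val_one', Nat.mod_eq_of_lt hn]
      have hcb : c - a = (c - b) - 1 := by rw [← hab1]; ring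
      rw [hcb]
      calc min ((c-b)-1).val (n - ((c-b)-1).val) ≤ min (c-b).val (n - (c-b).val) + 1 :=
        cf_sub hn _
      _ ≤ q.length + 1 := by omega
    · have hab1 : b - a = 1 := by
        apply Fin.ext; rw [h, Fin.val_one', Nat.mod_eq_of_lt hn]
      have hcb : c - a = (c - b) + 1 := by rw [← hab1]; ring
      rw [hcb]
      calc min ((c-b)+1).val (n - ((c-b)+1).val) ≤ min (c-b).val (n - (c-b).val) + 1 :=
        cf_add hn _
      _ ≤ q.length + 1 := by omega

private theorem cycle_dist (hn : 2 ≤ n) (v w : Fin n) :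
    (cycleGraph n).dist v w = min (w - v).val (n - (w - v).val) := by
  apply le_antisymm
  · apply le_min
    · have h1 : w = v + (((w - v).val : ℕ) : Fin n) := by
        rw [Fin.cast_val_eq_self]; ring
      conv_lhs => rw [h1]
      exact distA hn _ v
    · have h2 : w = v - (((n - (w - v).val : ℕ) : ℕ) : Fin n) := by
        have hle : (w - v).val ≤ n := le_of_lt (Fin.isLt _)
        push_cast [Nat.cast_sub hle]
        simp
      conv_lhs => rw [h2]
      exact distB hn _ v
  · obtain ⟨m, hm⟩ : ∃ m, n = m + 1 := ⟨n - 1, by omega⟩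
    subst hm
    obtain ⟨p, hp⟩ := cycleGraph_connected.exists_walk_length_eq_dist v w
    rw [← hp]
    exact walk_lb hn p

end CycleDist

private theorem setDist_singleton {V : Type*} (G : SimpleGraph V) (v w : V) :
    setDist G {v} w = G.dist v w := by simp [setDist]

private theorem setDist_pair {V : Type*} (G : SimpleGraph V) (u v w : V) :
    setDist G {u, v} w = min (G.dist u w) (G.dist v w) := by
  unfold setDist; rw [Set.image_pair, csInf_pair]

section ResCycle
variable {k : ℕ} [NeZero (2*k)]

private theorem resSet_singleton (v : Fin (2*k)) :
    resSet (cycleGraph (2*k)) {v} = {v + (↑k : Fin (2*k))} := by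
  have hk : 1 ≤ k := by have := NeZero.ne (2*k); omega
  have hn : 2 ≤ 2*k := by omega
  have key : ∀ w : Fin (2*k), setDist (cycleGraph (2*k)) {v} w
      = min ((w - v).val) (2*k - (w - v).val) := fun w => by
    rw [setDist_singleton, cycle_dist hn]
  have hkval : ((↑k : Fin (2*k))).val = k := Fin.val_cast_of_lt (by omega)
  have hvk : (v + (↑k : Fin (2*k))) - v = (↑k : Fin (2*k)) := by ring
  have hmax : setDist (cycleGraph (2*k)) {v} (v + (↑k : Fin (2*k))) = k := by
    rw [key, hvk, hkval]; omega
  ext w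
  simp only [resSet, Set.mem_setOf_eq, Set.mem_singleton_iff]
  constructor
  · intro h
    have h1 := h (v + (↑k : Fin (2*k)))
    rw [hmax, key] at h1
    have hlt := (w - v).isLt
    have hwv : (w - v).val = k := by omega
    have h2 : w - v = (↑k : Fin (2*k)) := Fin.ext (by rw [hwv, hkval])
    rw [← h2]; ring
  · rintro rfl
    intro w'
    rw [hmax, key]
    have hlt := (w' - v).isLt
    omega

private theorem res_singleton (v : Fin (2*k)) :
    Nonempty (Res (cycleGraph (2*k)) {v} ≃g (⊤ : SimpleGraph (Fin 1))) := by
  have he := resSet_singleton (k := k) v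
  have hmem : ∀ a : resSet (cycleGraph (2*k)) {v}, a.1 = v + (↑k : Fin (2*k)) := by
    intro a; exact (Set.ext_iff.mp he a.1).mp a.2
  refine ⟨⟨⟨fun _ => 0, fun _ => ⟨v + (↑k : Fin (2*k)), by rw [he]; rfl⟩, ?_, ?_⟩, ?_⟩⟩
  · intro a; exact Subtype.ext (hmem a).symm
  · intro b; exact Subsingleton.elim _ _
  · intro a b
    simp only [Equiv.coe_fn_mk, top_adj]
    constructor
    · intro h; exact absurd rfl h
    · intro h
      exfalso
      have h' : (cycleGraph (2*k)).Adj a.1 b.1 := h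
      rw [hmem a, hmem b] at h'
      exact (cycleGraph (2*k)).irrefl h'

private theorem resSet_pair (u : Fin (2*k)) :
    resSet (cycleGraph (2*k)) {u, u+1} =
      {u + (↑k : Fin (2*k)), u + (↑k : Fin (2*k)) + 1} := by
  have hk : 1 ≤ k := by have := NeZero.ne (2*k); omega
  have hn : 2 ≤ 2*k := by omega
  have key : ∀ w : Fin (2*k), setDist (cycleGraph (2*k)) {u, u+1} w
      = min (min (w - u).val (2*k - (w - u).val))
            (min (w - u - 1).val (2*k - (w - u - 1).val)) := fun w => by
    rw [setDist_pair, cycle_dist hn, cycle_dist hn]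
    have h1 : w - (u + 1) = w - u - 1 := by ring
    rw [h1]
  have hkval : ((↑k : Fin (2*k))).val = k := Fin.val_cast_of_lt (by omega)
  have hk1val : ((↑k : Fin (2*k)) + 1).val = (k+1) % (2*k) := by
    rw [Fin.val_add, hkval, Fin.val_one', Nat.mod_eq_of_lt hn]
  have hkm1 : ((↑k : Fin (2*k)) - 1).val = k - 1 := by
    have h1 : ((k - 1 : ℕ) : Fin (2*k)) = (↑k : Fin (2*k)) - 1 := by
      push_cast [Nat.cast_sub hk]; ring
    rw [← h1, Fin.val_cast_of_lt (by omega)]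
  have hmod : (k+1) % (2*k) = if k = 1 then 0 else k + 1 := by
    split
    · next h => rw [h]
    · next h => rw [Nat.mod_eq_of_lt (by omega)]
  -- values at the two extremal points
  have ht1 : (u + (↑k : Fin (2*k))) - u = (↑k : Fin (2*k)) := by ring
  have hs1 : (u + (↑k : Fin (2*k))) - u - 1 = (↑k : Fin (2*k)) - 1 := by ring
  have ht2 : (u + (↑k : Fin (2*k)) + 1) - u = (↑k : Fin (2*k)) + 1 := by ring
  have hs2 : (u + (↑k : Fin (2*k)) + 1) - u - 1 = (↑k : Fin (2*k)) := by ring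
  have hsimp : (↑k : Fin (2*k)) + 1 - 1 = (↑k : Fin (2*k)) := by ring
  have hmax1 : setDist (cycleGraph (2*k)) {u, u+1} (u + (↑k : Fin (2*k))) = k - 1 := by
    rw [key, ht1, hkval, hkm1]; omega
  have hmax2 : setDist (cycleGraph (2*k)) {u, u+1} (u + (↑k : Fin (2*k)) + 1) = k - 1 := by
    rw [key, ht2, hsimp, hkval, hk1val, hmod]
    split <;> omega
  have bound : ∀ w : Fin (2*k), setDist (cycleGraph (2*k)) {u, u+1} w ≤ k - 1 := by
    intro w
    rw [key, sub_one_val hn, mod_cases hn (w - u).isLt]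
    have hlt := (w - u).isLt
    split <;> omega
  ext w
  simp only [resSet, Set.mem_setOf_eq, Set.mem_insert_iff, Set.mem_singleton_iff]
  constructor
  · intro h
    have h1 := h (u + (↑k : Fin (2*k)))
    rw [hmax1, key, sub_one_val hn, mod_cases hn (w - u).isLt] at h1
    have hlt := (w - u).isLt
    have hcases : (w - u).val = k ∨ (w - u).val = (k+1) % (2*k) := by
      rw [hmod]
      rcases eq_or_ne k 1 with hk1 | hk1
      · subst hk1; omega
      · split at h1 <;> simp only [if_neg hk1] <;> omega
    rcases hcases with hc | hc
    · left
      have h2 : w - u = (↑k : Fin (2*k)) := Fin.ext (by rw [hc, hkval])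
      rw [← h2]; ring
    · right
      have h2 : w - u = (↑k : Fin (2*k)) + 1 := Fin.ext (by rw [hc, hk1val])
      have h3 : w = u + (w - u) := by ring
      rw [h3, h2]; ring
  · rintro (rfl | rfl) <;> intro w'
    · rw [hmax1]; exact bound w'
    · rw [hmax2]; exact bound w'

private theorem res_pair (u : Fin (2*k)) :
    Nonempty (Res (cycleGraph (2*k)) {u, u+1} ≃g (⊤ : SimpleGraph (Fin 2))) := by
  have hk : 1 ≤ k := by have := NeZero.ne (2*k); omega
  have hn : 2 ≤ 2*k := by omega
  set a := u + (↑k : Fin (2*k)) with ha_def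
  set b := u + (↑k : Fin (2*k)) + 1 with hb_def
  have he := resSet_pair (k := k) u
  have hne : a ≠ b := by
    intro h
    have h1 : (1 : Fin (2*k)) = 0 := by
      have := sub_eq_zero_of_eq h.symm
      rwa [hb_def, ha_def, add_sub_cancel_left] at this
    have := congrArg Fin.val h1
    rw [Fin.val_one', Nat.mod_eq_of_lt hn, Fin.val_zero] at this
    omega
  have hba : b ≠ a := fun hh => hne hh.symm
  have hadj : (cycleGraph (2*k)).Adj a b := adjA hn a
  have hmem : ∀ x : resSet (cycleGraph (2*k)) {u, u+1}, x.1 = a ∨ x.1 = b := by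
    intro x; exact (Set.ext_iff.mp he x.1).mp x.2
  have haS : a ∈ resSet (cycleGraph (2*k)) {u, u+1} := by rw [he]; left; rfl
  have hbS : b ∈ resSet (cycleGraph (2*k)) {u, u+1} := by rw [he]; right; rfl
  refine ⟨⟨⟨fun x => if x.1 = a then 0 else 1,
      fun i => if i = 0 then ⟨a, haS⟩ else ⟨b, hbS⟩, ?_, ?_⟩, ?_⟩⟩
  · intro x
    rcases hmem x with h | h
    · simp only [h, if_pos rfl]
      exact Subtype.ext h.symm
    · simp only [h, if_neg hba, one_ne_zero, if_neg]
      exact Subtype.ext h.symm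
  · intro i
    fin_cases i
    · simp
    · simp [hba]
  · intro x y
    simp only [Equiv.coe_fn_mk, top_adj]
    have hresAdj : (Res (cycleGraph (2*k)) {u, u+1}).Adj x y ↔
        (cycleGraph (2*k)).Adj x.1 y.1 := Iff.rfl
    rw [hresAdj]
    rcases hmem x with hx | hx <;> rcases hmem y with hy | hy
    · rw [hx, hy]
      simp only [if_pos rfl, ne_eq, not_true_eq_false, false_iff]
      exact fun h => (cycleGraph (2*k)).irrefl h
    · rw [hx, hy]
      rw [if_pos rfl, if_neg hba]
      constructor
      · intro _; exact hadj
      · intro _; exact zero_ne_one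
    · rw [hx, hy]
      rw [if_pos rfl, if_neg hba]
      constructor
      · intro _; exact hadj.symm
      · intro _; exact one_ne_zero
    · rw [hx, hy]
      simp only [if_neg hba, ne_eq, not_true_eq_false, false_iff]
      exact fun h => (cycleGraph (2*k)).irrefl h

end ResCycle

theorem statement_5 (k : ℕ) (hk : 1 ≤ k) :
    (∀ v : Fin (2 * k),
      Nonempty (Res (cycleGraph (2 * k)) {v} ≃g (⊤ : SimpleGraph (Fin 1)))) ∧
    (∀ u v : Fin (2 * k), (cycleGraph (2 * k)).Adj u v →
      Nonempty (Res (cycleGraph (2 * k)) {u, v} ≃g (⊤ : SimpleGraph (Fin 2)))) := by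
  haveI : NeZero (2*k) := ⟨by omega⟩
  have hn : 2 ≤ 2*k := by omega
  constructor
  · intro v; exact res_singleton v
  · intro u v huv
    rw [cycleGraph_adj'] at huv
    rcases huv with h | h
    · -- (u - v).val = 1, so u = v + 1
      have h1 : u - v = 1 := by
        apply Fin.ext; rw [h, Fin.val_one', Nat.mod_eq_of_lt hn]
      have h2 : u = v + 1 := by rw [← h1]; ring
      subst h2
      have hs : ({v + 1, v} : Set (Fin (2*k))) = {v, v + 1} := Set.pair_comm _ _
      rw [hs]
      exact res_pair v
    · have h1 : v - u = 1 := by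
        apply Fin.ext; rw [h, Fin.val_one', Nat.mod_eq_of_lt hn]
      have h2 : v = u + 1 := by rw [← h1]; ring
      subst h2
      exact res_pair u
end

section
/- Let G and H be connected finite graphs with roots R_G ⊆ V(G) and R_H ⊆ V(H). Then Res(G □ H, R_G × R_H) is isomorphic to Res(G, R_G) □ Res(H, R_H), where □ denotes the Cartesian product of graphs. -/
open SimpleGraph

private lemma walk_length_lower {α β : Type*} {G : SimpleGraph α} {H : SimpleGraph β}
    (hG : G.Connected) (hH : H.Connected) :
    ∀ {x y : α × β} (w : (G □ H).Walk x y),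
      G.dist x.1 y.1 + H.dist x.2 y.2 ≤ w.length := by
  intro x y w
  induction w with
  | nil => simp
  | cons h p ih =>
    rename_i u v z
    rcases h with ⟨hadj, heq⟩ | ⟨hadj, heq⟩
    · have h1 : G.dist u.1 z.1 ≤ 1 + G.dist v.1 z.1 := by
        calc G.dist u.1 z.1 ≤ G.dist u.1 v.1 + G.dist v.1 z.1 := hG.dist_triangle
        _ ≤ 1 + G.dist v.1 z.1 := by
            have : G.dist u.1 v.1 = 1 := SimpleGraph.dist_eq_one_iff_adj.mpr hadj
            omega
      have h2 : H.dist u.2 z.2 = H.dist v.2 z.2 := by rw [heq]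
      change _ ≤ p.length + 1
      omega
    · have h1 : H.dist u.2 z.2 ≤ 1 + H.dist v.2 z.2 := by
        calc H.dist u.2 z.2 ≤ H.dist u.2 v.2 + H.dist v.2 z.2 := hH.dist_triangle
        _ ≤ 1 + H.dist v.2 z.2 := by
            have : H.dist u.2 v.2 = 1 := SimpleGraph.dist_eq_one_iff_adj.mpr hadj
            omega
      have h2 : G.dist u.1 z.1 = G.dist v.1 z.1 := by rw [heq]
      change _ ≤ p.length + 1
      omega

private lemma boxProd_dist {α β : Type*} {G : SimpleGraph α} {H : SimpleGraph β}
    (hG : G.Connected) (hH : H.Connected) (a c : α) (b d : β) :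
    (G □ H).dist (a, b) (c, d) = G.dist a c + H.dist b d := by
  refine le_antisymm ?_ ?_
  · obtain ⟨p, hp⟩ := hG.exists_walk_length_eq_dist a c
    obtain ⟨q, hq⟩ := hH.exists_walk_length_eq_dist b d
    have := SimpleGraph.dist_le ((SimpleGraph.Walk.boxProdLeft H b p).append
      (SimpleGraph.Walk.boxProdRight G c q))
    have e1 : (SimpleGraph.Walk.boxProdLeft H b p).length = p.length :=
      SimpleGraph.Walk.length_map _ _
    have e2 : (SimpleGraph.Walk.boxProdRight G c q).length = q.length :=
      SimpleGraph.Walk.length_map _ _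
    rw [SimpleGraph.Walk.length_append, e1, e2, hp, hq] at this
    exact this
  · obtain ⟨w, hw⟩ := ((hG.boxProd hH) (a, b) (c, d)).exists_walk_length_eq_dist
    rw [← hw]
    exact walk_length_lower hG hH w

private lemma setDist_boxProd {α β : Type*} {G : SimpleGraph α} {H : SimpleGraph β}
    (hG : G.Connected) (hH : H.Connected) {RG : Set α} {RH : Set β}
    (hRG : RG.Nonempty) (hRH : RH.Nonempty) (a : α) (b : β) :
    setDist (G □ H) (RG ×ˢ RH) (a, b) = setDist G RG a + setDist H RH b := by
  have hGne : ((fun s => G.dist s a) '' RG).Nonempty := hRG.image _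
  have hHne : ((fun s => H.dist s b) '' RH).Nonempty := hRH.image _
  obtain ⟨s, hs, hsa⟩ : ∃ s ∈ RG, G.dist s a = setDist G RG a := by
    have := Nat.sInf_mem hGne
    obtain ⟨s, hs, h⟩ := this
    exact ⟨s, hs, h⟩
  obtain ⟨t, ht, htb⟩ : ∃ t ∈ RH, H.dist t b = setDist H RH b := by
    have := Nat.sInf_mem hHne
    obtain ⟨t, ht, h⟩ := this
    exact ⟨t, ht, h⟩
  refine le_antisymm ?_ ?_
  · have hmem : (G □ H).dist (s, t) (a, b) ∈
        ((fun s => (G □ H).dist s (a, b)) '' (RG ×ˢ RH)) :=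
      ⟨(s, t), ⟨hs, ht⟩, rfl⟩
    calc setDist (G □ H) (RG ×ˢ RH) (a, b) ≤ (G □ H).dist (s, t) (a, b) := Nat.sInf_le hmem
    _ = G.dist s a + H.dist t b := boxProd_dist hG hH s a t b
    _ = _ := by rw [hsa, htb]
  · refine le_csInf (hRG.prod hRH |>.image _) ?_
    rintro n ⟨⟨u, v⟩, ⟨hu, hv⟩, rfl⟩
    have h1 : setDist G RG a ≤ G.dist u a := Nat.sInf_le ⟨u, hu, rfl⟩
    have h2 : setDist H RH b ≤ H.dist v b := Nat.sInf_le ⟨v, hv, rfl⟩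
    have := boxProd_dist hG hH u a v b
    simp only [this]
    omega

private lemma resSet_boxProd {α β : Type*} {G : SimpleGraph α} {H : SimpleGraph β}
    (hG : G.Connected) (hH : H.Connected) {RG : Set α} {RH : Set β}
    (hRG : RG.Nonempty) (hRH : RH.Nonempty) :
    resSet (G □ H) (RG ×ˢ RH) = (resSet G RG) ×ˢ (resSet H RH) := by
  ext ⟨a, b⟩
  constructor
  · intro h
    constructor
    · intro c
      have := h (c, b)
      rw [setDist_boxProd hG hH hRG hRH, setDist_boxProd hG hH hRG hRH] at this
      have e1 : setDist G RG (a, b).1 = setDist G RG a := rfl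
      have e2 : setDist H RH (a, b).2 = setDist H RH b := rfl
      omega
    · intro d
      have := h (a, d)
      rw [setDist_boxProd hG hH hRG hRH, setDist_boxProd hG hH hRG hRH] at this
      have e1 : setDist G RG (a, b).1 = setDist G RG a := rfl
      have e2 : setDist H RH (a, b).2 = setDist H RH b := rfl
      omega
  · rintro ⟨h1, h2⟩ ⟨c, d⟩
    rw [setDist_boxProd hG hH hRG hRH, setDist_boxProd hG hH hRG hRH]
    have e1 : setDist G RG (a, b).1 = setDist G RG a := rfl
    have e2 : setDist H RH (a, b).2 = setDist H RH b := rfl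
    have := h1 c
    have := h2 d
    omega

theorem statement_12 {α β : Type*} [Fintype α] [Fintype β]
    (G : SimpleGraph α) (H : SimpleGraph β) (hG : G.Connected) (hH : H.Connected)
    (RG : Set α) (RH : Set β) (hRG : RG.Nonempty) (hRH : RH.Nonempty) :
    Nonempty (Res (G □ H) (RG ×ˢ RH) ≃g (Res G RG □ Res H RH)) := by
  have hset := Set.ext_iff.mp (resSet_boxProd hG hH hRG hRH)
  refine ⟨⟨⟨fun x => (⟨x.1.1, ((hset x.1).mp x.2).1⟩, ⟨x.1.2, ((hset x.1).mp x.2).2⟩),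
    fun p => ⟨(p.1.1, p.2.1), (hset _).mpr (Set.mk_mem_prod p.1.2 p.2.2)⟩,
    fun x => Subtype.ext rfl, fun p => Prod.ext (Subtype.ext rfl) (Subtype.ext rfl)⟩, ?_⟩⟩
  rintro ⟨⟨a, b⟩, hu⟩ ⟨⟨c, d⟩, hv⟩
  show (Res G RG □ Res H RH).Adj (⟨a, _⟩, ⟨b, _⟩) (⟨c, _⟩, ⟨d, _⟩) ↔ (G □ H).Adj (a, b) (c, d)
  simp only [Res, SimpleGraph.induce, boxProd_adj, comap_adj, Function.Embedding.coe_subtype,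
    Subtype.mk.injEq]
end

section
/- Let G and H be connected finite graphs with roots R_G, R_H, and let d_{R_G} and d_{R_H} denote the maximal distances from the roots to vertices of G and H respectively. Then in the strong product: if d_{R_G} > d_{R_H} then Res(G ⊠ H, R_G × R_H) ≅ Res(G, R_G) ⊠ H; if d_{R_G} < d_{R_H} then Res(G ⊠ H, R_G × R_H) ≅ G ⊠ Res(H, R_H); and if d_{R_G} = d_{R_H} then Res(G ⊠ H, R_G × R_H) is the subgraph induced on (V(Res(G,R_G)) × V(H)) ∪ (V(G) × V(Res(H,R_H))). -/
open SimpleGraph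

/-- The strong product of two simple graphs. -/
def strongProd {α β : Type*} (G : SimpleGraph α) (H : SimpleGraph β) :
    SimpleGraph (α × β) where
  Adj x y := x ≠ y ∧ (x.1 = y.1 ∨ G.Adj x.1 y.1) ∧ (x.2 = y.2 ∨ H.Adj x.2 y.2)
  symm := ⟨by
    rintro x y ⟨hne, h1, h2⟩
    exact ⟨hne.symm, h1.imp Eq.symm (fun h => G.adj_symm h), h2.imp Eq.symm (fun h => H.adj_symm h)⟩⟩
  loopless := ⟨fun x h => h.1 rfl⟩

namespace SPAux

variable {α β : Type*}

/-- Graph hom `G → G ⊠ H` fixing the second coordinate. -/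
def homLeft (G : SimpleGraph α) (H : SimpleGraph β) (b : β) : G →g strongProd G H where
  toFun a := (a, b)
  map_rel' := fun {x y} h =>
    ⟨fun he => h.ne (congrArg Prod.fst he), Or.inr h, Or.inl rfl⟩

/-- Graph hom `H → G ⊠ H` fixing the first coordinate. -/
def homRight (G : SimpleGraph α) (H : SimpleGraph β) (a : α) : H →g strongProd G H where
  toFun b := (a, b)
  map_rel' := fun {x y} h =>
    ⟨fun he => h.ne (congrArg Prod.snd he), Or.inl rfl, Or.inr h⟩

/-- A walk in the strong product made from walks in the two factors, of length the max. -/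
def diagWalk (G : SimpleGraph α) (H : SimpleGraph β) :
    ∀ {a c : α} {b d : β}, G.Walk a c → H.Walk b d → (strongProd G H).Walk (a, b) (c, d)
  | _, _, _, _, Walk.nil, q => q.map (homRight G H _)
  | _, _, _, _, Walk.cons h p, Walk.nil => (Walk.cons h p).map (homLeft G H _)
  | _, _, _, _, Walk.cons hg p, Walk.cons hh q =>
      Walk.cons (show (strongProd G H).Adj _ _ from ⟨fun he => hg.ne (congrArg Prod.fst he), Or.inr hg, Or.inr hh⟩)
        (diagWalk G H p q)

lemma diagWalk_length (G : SimpleGraph α) (H : SimpleGraph β) :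
    ∀ {a c : α} {b d : β} (p : G.Walk a c) (q : H.Walk b d),
      (diagWalk G H p q).length = max p.length q.length
  | _, _, _, _, Walk.nil, q => by simp [diagWalk]; exact Walk.length_map _ _
  | _, _, _, _, Walk.cons h p, Walk.nil => by
      simp [diagWalk]; exact (Walk.length_cons _ _).trans (congrArg (· + 1) (Walk.length_map _ _))
  | _, _, _, _, Walk.cons hg p, Walk.cons hh q => by
      have := diagWalk_length G H p q
      simp only [diagWalk, Walk.length_cons, this]
      omega

lemma proj_left (G : SimpleGraph α) (H : SimpleGraph β) :
    ∀ {x y : α × β} (w : (strongProd G H).Walk x y),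
      ∃ p : G.Walk x.1 y.1, p.length ≤ w.length
  | _, _, Walk.nil => ⟨Walk.nil, le_rfl⟩
  | x, y, Walk.cons h w => by
      obtain ⟨p, hp⟩ := proj_left G H w
      rcases h.2.1 with he | ha
      · exact ⟨p.copy he.symm rfl, by
          rw [Walk.length_copy, Walk.length_cons]; exact hp.trans (Nat.le_succ _)⟩
      · exact ⟨Walk.cons ha p, by
          rw [Walk.length_cons, Walk.length_cons]; exact Nat.succ_le_succ hp⟩

lemma proj_right (G : SimpleGraph α) (H : SimpleGraph β) :
    ∀ {x y : α × β} (w : (strongProd G H).Walk x y),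
      ∃ q : H.Walk x.2 y.2, q.length ≤ w.length
  | _, _, Walk.nil => ⟨Walk.nil, le_rfl⟩
  | x, y, Walk.cons h w => by
      obtain ⟨q, hq⟩ := proj_right G H w
      rcases h.2.2 with he | ha
      · exact ⟨q.copy he.symm rfl, by
          rw [Walk.length_copy, Walk.length_cons]; exact hq.trans (Nat.le_succ _)⟩
      · exact ⟨Walk.cons ha q, by
          rw [Walk.length_cons, Walk.length_cons]; exact Nat.succ_le_succ hq⟩

lemma dist_strongProd (G : SimpleGraph α) (H : SimpleGraph β)
    (hG : G.Connected) (hH : H.Connected) (a c : α) (b d : β) :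
    (strongProd G H).dist (a, b) (c, d) = max (G.dist a c) (H.dist b d) := by
  obtain ⟨p, hp⟩ := (hG.preconnected a c).exists_walk_length_eq_dist
  obtain ⟨q, hq⟩ := (hH.preconnected b d).exists_walk_length_eq_dist
  apply le_antisymm
  · calc (strongProd G H).dist (a, b) (c, d) ≤ (diagWalk G H p q).length := dist_le _
      _ = max p.length q.length := diagWalk_length G H p q
      _ = _ := by rw [hp, hq]
  · have hr : (strongProd G H).Reachable (a, b) (c, d) := ⟨diagWalk G H p q⟩
    obtain ⟨w, hw⟩ := hr.exists_walk_length_eq_dist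
    obtain ⟨p1, hp1⟩ := proj_left G H w
    obtain ⟨q1, hq1⟩ := proj_right G H w
    have h1 : G.dist a c ≤ w.length := le_trans (dist_le p1) hp1
    have h2 : H.dist b d ≤ w.length := le_trans (dist_le q1) hq1
    rw [hw] at h1 h2
    exact max_le h1 h2

lemma setDist_strongProd (G : SimpleGraph α) (H : SimpleGraph β)
    (hG : G.Connected) (hH : H.Connected) (RG : Set α) (RH : Set β)
    (hRG : RG.Nonempty) (hRH : RH.Nonempty) (a : α) (b : β) :
    setDist (strongProd G H) (RG ×ˢ RH) (a, b) =
      max (setDist G RG a) (setDist H RH b) := by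
  unfold setDist
  apply le_antisymm
  · obtain ⟨s, hs, hse⟩ := Nat.sInf_mem (hRG.image (fun s => G.dist s a))
    obtain ⟨t, ht, hte⟩ := Nat.sInf_mem (hRH.image (fun t => H.dist t b))
    refine Nat.sInf_le ⟨(s, t), ⟨hs, ht⟩, ?_⟩
    simp only [dist_strongProd G H hG hH]
    exact congrArg₂ Max.max hse hte
  · apply le_csInf (((hRG.prod hRH)).image _)
    rintro _ ⟨⟨s, t⟩, ⟨hs, ht⟩, rfl⟩
    simp only [dist_strongProd G H hG hH]
    exact max_le_max (Nat.sInf_le ⟨s, hs, rfl⟩) (Nat.sInf_le ⟨t, ht, rfl⟩)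

lemma sSup_range_max [Fintype α] [Fintype β] [Nonempty α] [Nonempty β]
    (f : α → ℕ) (g : β → ℕ) :
    sSup (Set.range (fun x : α × β => max (f x.1) (g x.2))) =
      max (sSup (Set.range f)) (sSup (Set.range g)) := by
  have bF : BddAbove (Set.range f) := (Set.finite_range f).bddAbove
  have bG : BddAbove (Set.range g) := (Set.finite_range g).bddAbove
  have bP : BddAbove (Set.range (fun x : α × β => max (f x.1) (g x.2))) :=
    (Set.finite_range _).bddAbove
  apply le_antisymm
  · apply csSup_le (Set.range_nonempty _)
    rintro _ ⟨x, rfl⟩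
    exact max_le_max (le_csSup bF ⟨x.1, rfl⟩) (le_csSup bG ⟨x.2, rfl⟩)
  · obtain ⟨a0, ha0⟩ := Nat.sSup_mem (Set.range_nonempty f) bF
    obtain ⟨b0, hb0⟩ := Nat.sSup_mem (Set.range_nonempty g) bG
    refine le_csSup bP ⟨(a0, b0), ?_⟩
    simp [ha0, hb0]

lemma mem_resSet_iff {V : Type*} [Fintype V] [Nonempty V]
    (G : SimpleGraph V) (S : Set V) (v : V) :
    v ∈ resSet G S ↔ setDist G S v = sSup (Set.range (setDist G S)) := by
  constructor
  · intro h
    refine le_antisymm (le_csSup ((Set.finite_range _).bddAbove) ⟨v, rfl⟩) ?_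
    apply csSup_le (Set.range_nonempty _)
    rintro _ ⟨w, rfl⟩
    exact h w
  · intro h w
    rw [h]
    exact le_csSup ((Set.finite_range _).bddAbove) ⟨w, rfl⟩

end SPAux

open SPAux in
theorem statement_15 {α β : Type*} [Fintype α] [Fintype β]
    (G : SimpleGraph α) (H : SimpleGraph β) (hG : G.Connected) (hH : H.Connected)
    (RG : Set α) (RH : Set β) (hRG : RG.Nonempty) (hRH : RH.Nonempty) :
    (sSup (Set.range (setDist G RG)) > sSup (Set.range (setDist H RH)) →
      Nonempty (Res (strongProd G H) (RG ×ˢ RH) ≃g strongProd (Res G RG) H)) ∧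
    (sSup (Set.range (setDist G RG)) < sSup (Set.range (setDist H RH)) →
      Nonempty (Res (strongProd G H) (RG ×ˢ RH) ≃g strongProd G (Res H RH))) ∧
    (sSup (Set.range (setDist G RG)) = sSup (Set.range (setDist H RH)) →
      resSet (strongProd G H) (RG ×ˢ RH) =
        (resSet G RG) ×ˢ (Set.univ : Set β) ∪ (Set.univ : Set α) ×ˢ (resSet H RH)) := by
  haveI nα : Nonempty α := hG.nonempty
  haveI nβ : Nonempty β := hH.nonempty
  set f := setDist G RG with hf
  set g := setDist H RH with hg
  set MG := sSup (Set.range f) with hMG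
  set MH := sSup (Set.range g) with hMH
  have hdist : ∀ x : α × β,
      setDist (strongProd G H) (RG ×ˢ RH) x = max (f x.1) (g x.2) := fun x =>
    setDist_strongProd G H hG hH RG RH hRG hRH x.1 x.2
  have hSup : sSup (Set.range (setDist (strongProd G H) (RG ×ˢ RH))) = max MG MH := by
    have : setDist (strongProd G H) (RG ×ˢ RH) = fun x : α × β => max (f x.1) (g x.2) :=
      funext hdist
    rw [this, hMG, hMH]
    exact sSup_range_max f g
  have hmemP : ∀ x : α × β,
      x ∈ resSet (strongProd G H) (RG ×ˢ RH) ↔ max (f x.1) (g x.2) = max MG MH := by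
    intro x
    rw [mem_resSet_iff, hdist x, hSup]
  have hfle : ∀ a, f a ≤ MG := fun a => le_csSup ((Set.finite_range f).bddAbove) ⟨a, rfl⟩
  have hgle : ∀ b, g b ≤ MH := fun b => le_csSup ((Set.finite_range g).bddAbove) ⟨b, rfl⟩
  refine ⟨?_, ?_, ?_⟩
  · -- MG > MH
    intro hlt
    have hchar : ∀ x : α × β,
        x ∈ resSet (strongProd G H) (RG ×ˢ RH) ↔ x.1 ∈ resSet G RG := by
      intro x
      rw [hmemP, mem_resSet_iff, ← hf, ← hMG]
      have h1 := hfle x.1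
      have h2 := hgle x.2
      omega
    refine ⟨⟨⟨fun x => (⟨x.1.1, (hchar x.1).mp x.2⟩, x.1.2),
      fun y => ⟨(y.1.1, y.2), (hchar (y.1.1, y.2)).mpr y.1.2⟩,
      fun x => by ext <;> rfl, fun y => by ext <;> rfl⟩, ?_⟩⟩
    intro x y
    show (strongProd (Res G RG) H).Adj _ _ ↔ (strongProd G H).Adj x.1 y.1
    simp only [strongProd, Equiv.coe_fn_mk, ne_eq, Prod.ext_iff, Subtype.ext_iff]
    tauto
  · -- MG < MH
    intro hlt
    have hchar : ∀ x : α × β,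
        x ∈ resSet (strongProd G H) (RG ×ˢ RH) ↔ x.2 ∈ resSet H RH := by
      intro x
      rw [hmemP, mem_resSet_iff, ← hg, ← hMH]
      have h1 := hfle x.1
      have h2 := hgle x.2
      omega
    refine ⟨⟨⟨fun x => (x.1.1, ⟨x.1.2, (hchar x.1).mp x.2⟩),
      fun y => ⟨(y.1, y.2.1), (hchar (y.1, y.2.1)).mpr y.2.2⟩,
      fun x => by ext <;> rfl, fun y => by ext <;> rfl⟩, ?_⟩⟩
    intro x y
    show (strongProd G (Res H RH)).Adj _ _ ↔ (strongProd G H).Adj x.1 y.1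
    simp only [strongProd, Equiv.coe_fn_mk, ne_eq, Prod.ext_iff, Subtype.ext_iff]
    tauto
  · -- MG = MH
    intro heq
    ext x
    simp only [Set.mem_union, Set.mem_prod, Set.mem_univ, and_true, true_and]
    rw [hmemP, mem_resSet_iff, mem_resSet_iff, ← hf, ← hg, ← hMG, ← hMH]
    have h1 := hfle x.1
    have h2 := hgle x.2
    omega
end

section
/- Let G be a connected graph with root R_G such that the maximal distance d_{R_G} from R_G to the vertices of G is at least 3, and let H be any graph with root R_H. Then the distance residual of the lexicographic product satisfies Res(G ∘ H, R_G × R_H) ≅ Res(G, R_G) ∘ H. -/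
open SimpleGraph

/-- The lexicographic product of two simple graphs. -/
def lexProd {α β : Type*} (G : SimpleGraph α) (H : SimpleGraph β) :
    SimpleGraph (α × β) where
  Adj x y := G.Adj x.1 y.1 ∨ (x.1 = y.1 ∧ H.Adj x.2 y.2)
  symm := by
    refine ⟨?_⟩
    rintro x y (h | ⟨h1, h2⟩)
    · exact Or.inl h.symm
    · exact Or.inr ⟨h1.symm, h2.symm⟩
  loopless := by refine ⟨?_⟩; rintro x (h | ⟨-, h⟩) <;> exact h.ne rfl

section Aux

variable {α β : Type*} {G : SimpleGraph α} {H : SimpleGraph β}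

/-- The graph hom `v ↦ (v, x)` into the lexicographic product. -/
def lexHom (G : SimpleGraph α) (H : SimpleGraph β) (x : β) : G →g lexProd G H :=
  ⟨fun v => (v, x), fun h => Or.inl h⟩

lemma lex_dist_lower (hG : G.Connected) {a b : α × β} (p : (lexProd G H).Walk a b) :
    G.dist a.1 b.1 ≤ p.length := by
  induction p with
  | nil => simp
  | @cons a c b h p ih =>
    rcases h with hadj | ⟨heq, -⟩
    · obtain ⟨q, hq⟩ := hG.exists_walk_length_eq_dist c.1 b.1
      calc G.dist a.1 b.1 ≤ (SimpleGraph.Walk.cons hadj q).length := SimpleGraph.dist_le _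
        _ = G.dist c.1 b.1 + 1 := by simp [hq]
        _ ≤ p.length + 1 := by omega
        _ = (SimpleGraph.Walk.cons _ p).length := rfl
    · show G.dist a.1 b.1 ≤ p.length + 1
      rw [heq]
      omega

lemma lex_dist_eq (hG : G.Connected) {s u : α} (hne : s ≠ u) (t x : β) :
    (lexProd G H).dist (s, t) (u, x) = G.dist s u := by
  obtain ⟨p, hp⟩ := hG.exists_walk_length_eq_dist s u
  cases p with
  | nil => exact absurd rfl hne
  | @cons _ w _ h q =>
    have hq : (SimpleGraph.Walk.cons (Or.inl h : (lexProd G H).Adj (s, t) (w, x))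
        ((q.map (lexHom G H x)))).length = G.dist s u := by
      show (q.map (lexHom G H x)).length + 1 = _
      simpa using hp
    refine le_antisymm (hq ▸ SimpleGraph.dist_le _) ?_
    have hr : (lexProd G H).Reachable (s, t) (u, x) :=
      ⟨SimpleGraph.Walk.cons (Or.inl h) (q.map (lexHom G H x))⟩
    obtain ⟨r, hr'⟩ := hr.exists_walk_length_eq_dist
    calc G.dist s u ≤ r.length := lex_dist_lower hG r
      _ = _ := hr'

lemma setDist_lex_eq (hG : G.Connected) {RG : Set α} {RH : Set β} (hRG : RG.Nonempty)
    (hRH : RH.Nonempty) {u : α} (hu : setDist G RG u ≠ 0) (x : β) :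
    setDist (lexProd G H) (RG ×ˢ RH) (u, x) = setDist G RG u := by
  unfold setDist at *
  congr 1
  ext n
  constructor
  · rintro ⟨⟨s, t⟩, ⟨hs, ht⟩, rfl⟩
    have h1 : setDist G RG u ≤ G.dist s u := Nat.sInf_le ⟨s, hs, rfl⟩
    have hds : G.dist s u ≠ 0 := by unfold setDist at h1; omega
    have hne : s ≠ u := fun h => hds (h ▸ SimpleGraph.dist_self)
    exact ⟨s, hs, (lex_dist_eq hG hne t x).symm⟩
  · rintro ⟨s, hs, rfl⟩
    obtain ⟨t, ht⟩ := hRH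
    have h1 : setDist G RG u ≤ G.dist s u := Nat.sInf_le ⟨s, hs, rfl⟩
    have hds : G.dist s u ≠ 0 := by unfold setDist at h1; omega
    have hne : s ≠ u := fun h => hds (h ▸ SimpleGraph.dist_self)
    exact ⟨(s, t), ⟨hs, ht⟩, lex_dist_eq hG hne t x⟩

end Aux

theorem statement_17 {α β : Type*} [Fintype α] [Fintype β]
    (G : SimpleGraph α) (H : SimpleGraph β) (hG : G.Connected)
    (RG : Set α) (RH : Set β) (hRG : RG.Nonempty) (hRH : RH.Nonempty)
    (hd : 3 ≤ sSup (Set.range (setDist G RG))) :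
    Nonempty (Res (lexProd G H) (RG ×ˢ RH) ≃g lexProd (Res G RG) H) := by
  classical
  have : Nonempty α := ⟨hRG.choose⟩
  set M := sSup (Set.range (setDist G RG)) with hM
  have hbdd : BddAbove (Set.range (setDist G RG)) := (Set.finite_range _).bddAbove
  obtain ⟨v, hv⟩ : ∃ v, setDist G RG v = M := by
    have := Nat.sSup_mem (Set.range_nonempty (setDist G RG)) hbdd
    rwa [← hM, Set.mem_range] at this
  have hle : ∀ w, setDist G RG w ≤ M := fun w => le_csSup hbdd ⟨w, rfl⟩
  -- setDist attained
  have attain : ∀ w, ∃ s ∈ RG, G.dist s w = setDist G RG w := by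
    intro w
    have := Nat.sInf_mem (hRG.image (fun s => G.dist s w))
    obtain ⟨s, hs, h⟩ := this
    exact ⟨s, hs, h⟩
  -- vertices in RG have small lex setDist
  have hsmall : ∀ u ∈ RG, ∀ x : β, setDist (lexProd G H) (RG ×ˢ RH) (u, x) ≤ 2 := by
    intro u hu x
    obtain ⟨t, ht⟩ := hRH
    have hmem : (lexProd G H).dist (u, t) (u, x) ∈
        (fun s => (lexProd G H).dist s (u, x)) '' (RG ×ˢ RH) := ⟨(u, t), ⟨hu, ht⟩, rfl⟩
    refine le_trans (Nat.sInf_le hmem) ?_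
    -- u has a neighbor
    have h1 : setDist G RG v ≤ G.dist u v := Nat.sInf_le ⟨u, hu, rfl⟩
    have hdu : 3 ≤ G.dist u v := le_trans (hv ▸ hd) h1
    have hnev : u ≠ v := fun h => by simp [h, SimpleGraph.dist_self] at hdu
    obtain ⟨w, hw⟩ : ∃ w, G.Adj u w := by
      obtain ⟨p⟩ := hG.preconnected u v
      cases p with
      | nil => exact absurd rfl hnev
      | cons h _ => exact ⟨_, h⟩
    by_cases hxt : x = t
    · subst hxt; simp [SimpleGraph.dist_self]
    · by_cases hadj : H.Adj t x
      · have : (lexProd G H).Adj (u, t) (u, x) := Or.inr ⟨rfl, hadj⟩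
        calc (lexProd G H).dist (u, t) (u, x) ≤ (this.toWalk).length := SimpleGraph.dist_le _
          _ ≤ 2 := by simp
      · have e1 : (lexProd G H).Adj (u, t) (w, t) := Or.inl hw
        have e2 : (lexProd G H).Adj (w, t) (u, x) := Or.inl hw.symm
        calc (lexProd G H).dist (u, t) (u, x)
            ≤ (SimpleGraph.Walk.cons e1 e2.toWalk).length := SimpleGraph.dist_le _
          _ ≤ 2 := by simp
  have hRGzero : ∀ u, setDist G RG u = 0 → u ∈ RG := by
    intro u h0
    have h0' : (0 : ℕ) ∈ (fun s => G.dist s u) '' RG := by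
      rw [← h0]; exact Nat.sInf_mem (hRG.image _)
    obtain ⟨s, hs, hds⟩ := h0'
    rwa [hG.dist_eq_zero_iff.mp hds] at hs
  -- key characterization
  have key : ∀ u x, (u, x) ∈ resSet (lexProd G H) (RG ×ˢ RH) ↔ u ∈ resSet G RG := by
    intro u x
    constructor
    · intro h
      have hvne : setDist G RG v ≠ 0 := by omega
      have hvx := setDist_lex_eq (H := H) hG hRG hRH hvne x
      have hMle : M ≤ setDist (lexProd G H) (RG ×ˢ RH) (u, x) := by
        have := h (v, x); rw [hvx, hv] at this; exact this
      have hune : setDist G RG u ≠ 0 := by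
        intro h0
        have := hsmall u (hRGzero u h0) x
        omega
      have hux := setDist_lex_eq (H := H) hG hRG hRH hune x
      have huM : setDist G RG u = M := le_antisymm (hle u) (hux ▸ hMle)
      intro w
      rw [huM]; exact hle w
    · intro h
      have huM : setDist G RG u = M := le_antisymm (hle u) (hv ▸ h v)
      have hune : setDist G RG u ≠ 0 := by omega
      have hux := setDist_lex_eq (H := H) hG hRG hRH hune x
      rintro ⟨w, y⟩
      by_cases hw : setDist G RG w = 0
      · have := hsmall w (hRGzero w hw) y
        rw [hux, huM]; omega
      · rw [hux, setDist_lex_eq (H := H) hG hRG hRH hw y]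
        exact h w
  refine ⟨⟨?_, ?_⟩⟩
  · exact {
      toFun := fun a => (⟨a.1.1, (key a.1.1 a.1.2).mp (by rw [Prod.mk.eta]; exact a.2)⟩, a.1.2)
      invFun := fun p => ⟨(p.1.1, p.2), (key p.1.1 p.2).mpr p.1.2⟩
      left_inv := fun a => by ext <;> simp
      right_inv := fun p => by ext <;> simp }
  · intro a b
    show _ ↔ (lexProd G H).Adj a.1 b.1
    constructor
    · rintro (h | ⟨h1, h2⟩)
      · exact Or.inl h
      · exact Or.inr ⟨congrArg Subtype.val h1, h2⟩
    · rintro (h | ⟨h1, h2⟩)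
      · exact Or.inl h
      · exact Or.inr ⟨Subtype.ext h1, h2⟩
end

section
/- Let G₁, …, G_n be graphs and let x = (x₁,…,x_n), y = (y₁,…,y_n) be vertices of the direct product G = G₁ × ⋯ × G_n. If no integer m exists such that every G_i contains an x_i–y_i walk of length m, then x and y lie in different connected components of G; otherwise d_G(x,y) = min { m ∈ ℕ : every G_i has an x_i–y_i walk of length m }. -/
open SimpleGraph

/-- The direct (tensor) product of a family of simple graphs:
tuples are adjacent iff they are adjacent coordinatewise in every factor. -/
def directProd {ι : Type*} {V : ι → Type*} (G : ∀ i, SimpleGraph (V i)) :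
    SimpleGraph (∀ i, V i) where
  Adj x y := (∀ i, (G i).Adj (x i) (y i)) ∧ x ≠ y
  symm := ⟨by rintro x y ⟨h, hne⟩; exact ⟨fun i => (h i).symm, hne.symm⟩⟩
  loopless := ⟨fun x h => h.2 rfl⟩

/-- Projection of a product walk to a factor. -/
lemma proj_walk {ι : Type*} {V : ι → Type*} (G : ∀ i, SimpleGraph (V i))
    {x y : ∀ i, V i} (w : (directProd G).Walk x y) (i : ι) :
    ∃ p : (G i).Walk (x i) (y i), p.length = w.length := by
  induction w with
  | nil => exact ⟨.nil, rfl⟩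
  | cons h p ih =>
    obtain ⟨q, hq⟩ := ih
    exact ⟨.cons (h.1 i) q, by simp [hq]⟩

/-- Lifting coordinatewise walks of equal length to a product walk. -/
lemma lift_walk {n : ℕ} (hn : 1 ≤ n) {V : Fin n → Type*}
    (G : ∀ i, SimpleGraph (V i)) (m : ℕ) :
    ∀ (x y : ∀ i, V i), (∀ i, ∃ w : (G i).Walk (x i) (y i), w.length = m) →
      ∃ W : (directProd G).Walk x y, W.length = m := by
  induction m with
  | zero =>
    intro x y h
    have hxy : x = y := by
      funext i
      obtain ⟨w, hw⟩ := h i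
      exact (SimpleGraph.Walk.eq_of_length_eq_zero hw)
    subst hxy
    exact ⟨.nil, rfl⟩
  | succ m ih =>
    intro x y h
    have h' : ∀ i, ∃ z, (G i).Adj (x i) z ∧
        ∃ w' : (G i).Walk z (y i), w'.length = m := by
      intro i
      obtain ⟨w, hw⟩ := h i
      have hnil : ¬ w.Nil := by
        simp [SimpleGraph.Walk.nil_iff_length_eq, hw]
      refine ⟨w.getVert 1, ?_, w.tail, ?_⟩
      · have := w.adj_getVert_succ (i := 0) (by omega)
        simpa [SimpleGraph.Walk.getVert_zero] using this
      · have := SimpleGraph.Walk.length_tail_add_one hnil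
        omega
    choose z hadj w' hw' using h'
    obtain ⟨W, hW⟩ := ih z y (fun i => ⟨w' i, hw' i⟩)
    have hne : x ≠ z := by
      intro hxz
      exact (hadj ⟨0, hn⟩).ne (congrFun hxz _)
    exact ⟨.cons (show (directProd G).Adj x z from ⟨hadj, hne⟩) W, by simp [hW]⟩

theorem statement_19 (n : ℕ) (hn : 1 ≤ n) (V : Fin n → Type*)
    (G : ∀ i, SimpleGraph (V i)) (x y : ∀ i, V i) :
    ((¬ ∃ m : ℕ, ∀ i, ∃ w : (G i).Walk (x i) (y i), w.length = m) →
        ¬ (directProd G).Reachable x y) ∧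
    ((∃ m : ℕ, ∀ i, ∃ w : (G i).Walk (x i) (y i), w.length = m) →
        (directProd G).dist x y =
          sInf {m : ℕ | ∀ i, ∃ w : (G i).Walk (x i) (y i), w.length = m}) := by
  have hset : Set.range (SimpleGraph.Walk.length : (directProd G).Walk x y → ℕ)
      = {m : ℕ | ∀ i, ∃ w : (G i).Walk (x i) (y i), w.length = m} := by
    ext m
    constructor
    · rintro ⟨W, rfl⟩ i
      exact proj_walk G W i
    · intro hm
      obtain ⟨W, hW⟩ := lift_walk hn G m x y hm
      exact ⟨W, hW⟩
  constructor
  · intro hne hr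
    obtain ⟨W⟩ := hr
    exact hne ⟨W.length, fun i => proj_walk G W i⟩
  · intro _
    rw [SimpleGraph.dist_eq_sInf, hset]
end
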